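/- Let H be a finite group with [H,H] ⊆ Z(H), set Z = [H,H], let χ be a faithful linear character of Z, and set m = √(|H : Z(H)|). Then for every linear character φ of Z(H) whose restriction to Z equals χ, the induced character φ↑^H equals m·τ_φ for some irreducible character τ_φ of H of degree τ_φ(1) = m; in particular m is a positive integer. -/

import Mathlib

open scoped Classical
open scoped commutatorElement

section Aux

open LinearMap

/-- The right regular representation of `H` on `H → ℂ`. -/
noncomputable def rightReg (H : Type*) [Group H] : Representation ℂ H (H → ℂ) where
  toFun g := LinearMap.funLeft ℂ ℂ (fun h => h * g)
  map_one' := by ext f h; simp [LinearMap.funLeft_apply]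
  map_mul' g₁ g₂ := by ext f h; simp [LinearMap.funLeft_apply, mul_assoc]

lemma rightReg_apply {H : Type*} [Group H] (g : H) (f : H → ℂ) (h : H) :
    rightReg H g f h = f (h * g) := rfl

/-- Restriction of a representation to an invariant submodule. -/
noncomputable def subRep {G V : Type*} [Group G] [AddCommGroup V] [Module ℂ V]
    (ρ : Representation ℂ G V) (U : Submodule ℂ V) (hU : ∀ g, ∀ w ∈ U, ρ g w ∈ U) :
    Representation ℂ G U where
  toFun g := (ρ g).restrict (hU g)
  map_one' := by ext u; simp [LinearMap.restrict_apply]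
  map_mul' g₁ g₂ := by ext u; simp [LinearMap.restrict_apply]

lemma subRep_apply {G V : Type*} [Group G] [AddCommGroup V] [Module ℂ V]
    (ρ : Representation ℂ G V) (U : Submodule ℂ V) (hU : ∀ g, ∀ w ∈ U, ρ g w ∈ U)
    (g : G) (u : U) : (subRep ρ U hU g u : V) = ρ g u := rfl

/-- Existence of a minimal nonzero invariant submodule inside a nonzero invariant submodule. -/
lemma exists_min {G V : Type*} [Group G] [AddCommGroup V] [Module ℂ V] [FiniteDimensional ℂ V]
    (ρ : Representation ℂ G V) :
    ∀ (W : Submodule ℂ V), (∀ g, ∀ w ∈ W, ρ g w ∈ W) → W ≠ ⊥ →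
      ∃ U : Submodule ℂ V, U ≤ W ∧ (∀ g, ∀ w ∈ U, ρ g w ∈ U) ∧ U ≠ ⊥ ∧
        ∀ U' ≤ U, (∀ g, ∀ w ∈ U', ρ g w ∈ U') → U' = ⊥ ∨ U' = U := by
  suffices h : ∀ (N : ℕ) (W : Submodule ℂ V), Module.finrank ℂ W ≤ N →
      (∀ g, ∀ w ∈ W, ρ g w ∈ W) → W ≠ ⊥ →
      ∃ U : Submodule ℂ V, U ≤ W ∧ (∀ g, ∀ w ∈ U, ρ g w ∈ U) ∧ U ≠ ⊥ ∧
        ∀ U' ≤ U, (∀ g, ∀ w ∈ U', ρ g w ∈ U') → U' = ⊥ ∨ U' = U by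
    intro W hinv hne
    exact h (Module.finrank ℂ W) W le_rfl hinv hne
  intro N
  induction N with
  | zero =>
    intro W hrk _ hne
    exact absurd (Submodule.finrank_eq_zero.mp (Nat.le_zero.mp hrk)) hne
  | succ N ih =>
    intro W hrk hinv hne
    by_cases hmin : ∀ U' ≤ W, (∀ g, ∀ w ∈ U', ρ g w ∈ U') → U' = ⊥ ∨ U' = W
    · exact ⟨W, le_rfl, hinv, hne, hmin⟩
    · push_neg at hmin
      obtain ⟨U', hU'le, hU'inv, hU'ne⟩ := hmin
      have hlt : U' < W := lt_of_le_of_ne hU'le hU'ne.2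
      have : Module.finrank ℂ U' ≤ N := by
        have := Submodule.finrank_lt_finrank_of_lt hlt
        omega
      obtain ⟨U, h1, h2, h3, h4⟩ := ih U' this hU'inv hU'ne.1
      exact ⟨U, h1.trans hU'le, h2, h3, h4⟩

/-- Schur's lemma, concrete form. -/
lemma schur_scalar {G V : Type*} [Group G] [AddCommGroup V] [Module ℂ V]
    [FiniteDimensional ℂ V] [Nontrivial V] (ρ : Representation ℂ G V)
    (hirr : ∀ S : Submodule ℂ V, (∀ g, ∀ w ∈ S, ρ g w ∈ S) → S = ⊥ ∨ S = ⊤)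
    (c : V →ₗ[ℂ] V) (hc : ∀ g, c ∘ₗ ρ g = ρ g ∘ₗ c) :
    ∃ μ : ℂ, c = μ • LinearMap.id := by
  obtain ⟨μ, hμ⟩ := Module.End.exists_eigenvalue c
  obtain ⟨v, hv⟩ := hμ.exists_hasEigenvector
  refine ⟨μ, ?_⟩
  set d : V →ₗ[ℂ] V := c - μ • LinearMap.id with hd
  have hdc : ∀ g, d ∘ₗ ρ g = ρ g ∘ₗ d := by
    intro g
    ext w
    simp only [hd, LinearMap.sub_comp, LinearMap.comp_sub, LinearMap.smul_comp,
      LinearMap.comp_smul, LinearMap.id_comp, LinearMap.comp_id, hc g]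
  have hker : ∀ g, ∀ w ∈ LinearMap.ker d, ρ g w ∈ LinearMap.ker d := by
    intro g w hw
    rw [LinearMap.mem_ker] at hw ⊢
    have := congrArg (fun f => f w) (hdc g)
    simp only [LinearMap.comp_apply] at this
    rw [this, hw, map_zero]
  rcases hirr _ hker with h | h
  · exfalso
    have hvker : v ∈ LinearMap.ker d := by
      rw [LinearMap.mem_ker]
      simp [hd, hv.apply_eq_smul]
    rw [h, Submodule.mem_bot] at hvker
    exact hv.2 hvker
  · have : d = 0 := LinearMap.ker_eq_top.mp h
    have := sub_eq_zero.mp (by rw [← hd]; exact this)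
    exact this

/-- Trace of the conjugation action on `End V`. -/
lemma trace_linHom {G V : Type*} [Group G] [AddCommGroup V] [Module ℂ V]
    [FiniteDimensional ℂ V] (ρ : Representation ℂ G V) (g : G) :
    LinearMap.trace ℂ (V →ₗ[ℂ] V) (Representation.linHom ρ ρ g)
      = LinearMap.trace ℂ V (ρ g) * LinearMap.trace ℂ V (ρ g⁻¹) := by
  set b := Module.finBasis ℂ V
  set e := dualTensorHomEquivOfBasis (N := V) b
  have he : Representation.linHom ρ ρ g =
      e.conj (TensorProduct.map (Representation.dual ρ g) (ρ g)) := by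
    apply LinearMap.ext; intro f
    rw [LinearEquiv.conj_apply_apply]
    have comm := Representation.dualTensorHom_comm ρ ρ g
    have h2 := congrArg (fun F => F (e.symm f)) comm
    simp only [LinearMap.comp_apply] at h2
    rw [dualTensorHomEquivOfBasis_symm_cancel_right] at h2
    rw [← h2]
    exact (dualTensorHomEquivOfBasis_apply b _).symm
  rw [he, LinearMap.trace_conj', LinearMap.trace_tensorProduct',
    Representation.dual_apply, LinearMap.trace_transpose', mul_comm]

end Aux

/-- The character of `H` induced from a linear character `φ` of the center `Z(H)`:
`φ↑^H(g) = |Z(H)|⁻¹ Σ_{x ∈ H, x⁻¹gx ∈ Z(H)} φ(x⁻¹gx)`. -/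
noncomputable def inducedFromCenter (H : Type*) [Group H] [Fintype H]
    (φ : ↥(Subgroup.center H) →* ℂˣ) (g : H) : ℂ :=
  (Nat.card ↥(Subgroup.center H) : ℂ)⁻¹ *
    ∑ x : H, if h : x⁻¹ * g * x ∈ Subgroup.center H then (φ ⟨x⁻¹ * g * x, h⟩ : ℂ) else 0

set_option maxHeartbeats 1000000 in
set_option synthInstance.maxHeartbeats 400000 in
/-- Let `H` be a finite group with `[H,H] ⊆ Z(H)`, `Z = [H,H]`, `χ` a
faithful linear character of `Z` and `m = √|H : Z(H)|`. For every linear character `φ` of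
`Z(H)` restricting to `χ` on `Z`, the induced character `φ↑^H` equals `m·τ_φ` for some
irreducible character `τ_φ` of `H` of degree `m`; in particular `m` is a positive
integer. -/
theorem induced_from_center_is_multiple_of_irreducible
    (H : Type*) [Group H] [Fintype H]
    (hHZ : commutator H ≤ Subgroup.center H)
    (χ : ↥(commutator H) →* ℂˣ) (hχ : Function.Injective χ)
    (φ : ↥(Subgroup.center H) →* ℂˣ)
    (hres : ∀ (z : H) (hz : z ∈ commutator H), φ ⟨z, hHZ hz⟩ = χ ⟨z, hz⟩) :
    ∃ m : ℕ, 0 < m ∧ m * m = (Subgroup.center H).index ∧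
      ∃ (n : ℕ) (ρ : Representation ℂ H (Fin n → ℂ)),
        0 < n ∧
        (∀ U : Submodule ℂ (Fin n → ℂ), (∀ g : H, ∀ w ∈ U, ρ g w ∈ U) → U = ⊥ ∨ U = ⊤) ∧
        LinearMap.trace ℂ (Fin n → ℂ) (ρ 1) = (m : ℂ) ∧
        ∀ g : H, inducedFromCenter H φ g = (m : ℂ) * LinearMap.trace ℂ (Fin n → ℂ) (ρ g) := by
  haveI : Invertible (Fintype.card H : ℂ) :=
    invertibleOfNonzero (Nat.cast_ne_zero.mpr Fintype.card_ne_zero)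
  -- the subspace of `φ`-semi-invariant functions
  set W : Submodule ℂ (H → ℂ) :=
    { carrier := {f | ∀ (z : ↥(Subgroup.center H)) (h : H), f (h * z) = (φ z : ℂ) * f h}
      add_mem' := fun {a b} ha hb z h => by
        simp only [Pi.add_apply, ha z h, hb z h]; ring
      zero_mem' := fun z h => by simp
      smul_mem' := fun c f hf z h => by
        simp only [Pi.smul_apply, smul_eq_mul, hf z h]; ring } with hWdef
  have hmemW : ∀ f : H → ℂ, f ∈ W ↔
      ∀ (z : ↥(Subgroup.center H)) (h : H), f (h * z) = (φ z : ℂ) * f h := fun f => Iff.rfl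
  have hWinv : ∀ g, ∀ f ∈ W, rightReg H g f ∈ W := by
    intro g f hf
    rw [hmemW] at hf ⊢
    intro z h
    have hz := (Subgroup.mem_center_iff.mp z.2) g
    show f (h * z * g) = (φ z : ℂ) * f (h * g)
    rw [mul_assoc, ← hz, ← mul_assoc]
    exact hf z (h * g)
  set f0 : H → ℂ := fun h => if hh : h ∈ Subgroup.center H then (φ ⟨h, hh⟩ : ℂ) else 0 with hf0
  have hf0W : f0 ∈ W := by
    rw [hmemW]
    intro z h
    by_cases hh : h ∈ Subgroup.center H
    · have hhz : (h * z : H) ∈ Subgroup.center H := Subgroup.mul_mem _ hh z.2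
      simp only [hf0]
      rw [dif_pos hhz, dif_pos hh]
      have h1 : (⟨(h * z : H), hhz⟩ : ↥(Subgroup.center H)) = ⟨h, hh⟩ * z := rfl
      rw [h1, map_mul, Units.val_mul]
      ring
    · have hhz : ¬ (h * z : H) ∈ Subgroup.center H := by
        intro hc
        apply hh
        have h2 := Subgroup.mul_mem _ hc (Subgroup.inv_mem _ z.2)
        simpa [mul_assoc] using h2
      simp only [hf0]
      rw [dif_neg hhz, dif_neg hh, mul_zero]
  have hf0ne : f0 ≠ 0 := by
    intro hc
    have h1 : f0 1 = 1 := by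
      simp only [hf0]
      rw [dif_pos (Subgroup.one_mem _)]
      have : (⟨(1:H), Subgroup.one_mem _⟩ : ↥(Subgroup.center H)) = 1 := rfl
      rw [this, map_one, Units.val_one]
    rw [hc] at h1
    simpa using h1
  have hWne : W ≠ ⊥ := by
    intro hc
    rw [hc, Submodule.mem_bot] at hf0W
    exact hf0ne hf0W
  obtain ⟨U, hUW, hUinv, hUne, hUmin⟩ := exists_min (rightReg H) W hWinv hWne
  set ρU := subRep (rightReg H) U hUinv with hρU
  set n := Module.finrank ℂ U with hn
  haveI hUnt : Nontrivial U := by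
    rcases (Submodule.ne_bot_iff U).mp hUne with ⟨x, hxU, hx0⟩
    exact ⟨⟨⟨x, hxU⟩, 0, by simp [Subtype.ext_iff, hx0]⟩⟩
  have hnpos : 0 < n := Module.finrank_pos
  -- the center acts by scalars
  have hscal : ∀ (z : H) (hz : z ∈ Subgroup.center H),
      ρU z = (φ ⟨z, hz⟩ : ℂ) • (LinearMap.id : U →ₗ[ℂ] U) := by
    intro z hz
    apply LinearMap.ext; intro u
    apply Subtype.ext
    funext h
    have hu : (u : H → ℂ) ∈ W := hUW u.2
    rw [hmemW] at hu
    have h1 := hu ⟨z, hz⟩ h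
    show (u : H → ℂ) (h * z) = _
    rw [h1]
    simp
  set tr : H → ℂ := fun g => LinearMap.trace ℂ U (ρU g) with htr
  have htrz : ∀ (z : H) (hz : z ∈ Subgroup.center H), tr z = (φ ⟨z, hz⟩ : ℂ) * n := by
    intro z hz
    show LinearMap.trace ℂ U (ρU z) = _
    rw [hscal z hz, map_smul, LinearMap.trace_id, smul_eq_mul, hn]
  have htr0 : ∀ g : H, g ∉ Subgroup.center H → tr g = 0 := by
    intro g hg
    obtain ⟨x, hx⟩ : ∃ x : H, ¬ (x * g = g * x) := by
      by_contra hc; push_neg at hc; exact hg (Subgroup.mem_center_iff.mpr hc)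
    set c := ⁅g⁻¹, x⁻¹⁆ with hcdef
    have hcZ : c ∈ commutator H := by
      rw [commutator_def]
      exact Subgroup.commutator_mem_commutator (Subgroup.mem_top _) (Subgroup.mem_top _)
    have hc1 : c ≠ 1 := by
      intro h1
      rw [hcdef, commutatorElement_eq_one_iff_mul_comm] at h1
      apply hx
      have h2 := congrArg (fun y => y⁻¹) h1
      simpa [mul_inv_rev] using h2
    have hgc : g * c = x⁻¹ * g * x := by rw [hcdef]; group
    have hφc : (φ ⟨c, hHZ hcZ⟩ : ℂ) ≠ 1 := by
      intro heq
      have h1 : χ ⟨c, hcZ⟩ = 1 := by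
        rw [← hres c hcZ]
        exact Units.ext (by simpa using heq)
      have h2 : (⟨c, hcZ⟩ : ↥(commutator H)) = 1 := hχ (by rw [h1, map_one])
      exact hc1 (by simpa [Subtype.ext_iff] using h2)
    have e1 : tr (g * c) = (φ ⟨c, hHZ hcZ⟩ : ℂ) * tr g := by
      show LinearMap.trace ℂ U (ρU (g * c)) = _
      rw [map_mul, hscal c (hHZ hcZ), ← Module.End.one_eq_id, mul_smul_comm, mul_one, map_smul, smul_eq_mul]
    have e2 : tr (g * c) = tr g := by
      show LinearMap.trace ℂ U (ρU (g * c)) = LinearMap.trace ℂ U (ρU g)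
      rw [hgc, show x⁻¹ * g * x = x⁻¹ * (g * x) by group, map_mul, LinearMap.trace_mul_comm,
        ← map_mul, show g * x * x⁻¹ = g by group]
    have key : ((φ ⟨c, hHZ hcZ⟩ : ℂ) - 1) * tr g = 0 := by
      rw [sub_mul, one_mul, ← e1, e2, sub_self]
    rcases mul_eq_zero.mp key with h | h
    · exact absurd (sub_eq_zero.mp h) hφc
    · exact h
  -- irreducibility of the restricted representation
  have hirrU : ∀ S : Submodule ℂ U, (∀ g, ∀ w ∈ S, ρU g w ∈ S) → S = ⊥ ∨ S = ⊤ := by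
    intro S hS
    have hinj := Submodule.injective_subtype U
    set S' := S.map U.subtype with hS'def
    have hS'le : S' ≤ U := by
      rintro _ ⟨s, hs, rfl⟩
      exact s.2
    have hS'inv : ∀ g, ∀ w ∈ S', rightReg H g w ∈ S' := by
      rintro g _ ⟨s, hs, rfl⟩
      exact ⟨ρU g s, hS g s hs, rfl⟩
    rcases hUmin S' hS'le hS'inv with h | h
    · left
      apply Submodule.map_injective_of_injective hinj
      rw [← hS'def, h, Submodule.map_bot]
    · right
      apply Submodule.map_injective_of_injective hinj
      rw [← hS'def, h, Submodule.map_top, Submodule.range_subtype]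
  -- transporting to `Fin n → ℂ`
  set e : U ≃ₗ[ℂ] (Fin n → ℂ) := (Module.finBasis ℂ U).equivFun with hedef
  set ρfin : Representation ℂ H (Fin n → ℂ) :=
    { toFun := fun g => e.conj (ρU g)
      map_one' := by
        show e.conj (ρU 1) = 1
        rw [map_one]
        ext v
        simp [LinearEquiv.conj_apply_apply]
      map_mul' := fun a b => by
        show e.conj (ρU (a * b)) = e.conj (ρU a) * e.conj (ρU b)
        ext v
        simp [LinearEquiv.conj_apply_apply, map_mul, Module.End.mul_apply,
          LinearEquiv.symm_apply_apply] } with hρfin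
  have hρfin_apply : ∀ g, ρfin g = e.conj (ρU g) := fun g => rfl
  haveI : Nontrivial (Fin n → ℂ) := by
    refine ⟨⟨0, fun _ => 1, fun h => ?_⟩⟩
    have := congrFun h ⟨0, hnpos⟩
    simpa using this
  have hirrfin : ∀ S : Submodule ℂ (Fin n → ℂ),
      (∀ g, ∀ w ∈ S, ρfin g w ∈ S) → S = ⊥ ∨ S = ⊤ := by
    intro S hS
    set S' := S.map (e.symm : (Fin n → ℂ) →ₗ[ℂ] U) with hS'def
    have hS'inv : ∀ g, ∀ w ∈ S', ρU g w ∈ S' := by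
      rintro g _ ⟨s, hs, rfl⟩
      refine ⟨ρfin g s, hS g s hs, ?_⟩
      show e.symm (ρfin g s) = ρU g (e.symm s)
      rw [hρfin_apply, LinearEquiv.conj_apply_apply, LinearEquiv.symm_apply_apply]
    rcases hirrU S' hS'inv with h | h
    · left
      apply (Submodule.eq_bot_iff _).mpr
      intro x hx
      have hmem : e.symm x ∈ S' := ⟨x, hx, rfl⟩
      rw [h, Submodule.mem_bot] at hmem
      have := congrArg e hmem
      simpa using this
    · right
      apply Submodule.eq_top_iff'.mpr
      intro x
      have hmem : e.symm x ∈ S' := h ▸ Submodule.mem_top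
      obtain ⟨s, hs, hsx⟩ := hmem
      have : s = x := e.symm.injective hsx
      rwa [← this]
  -- scalar action of the center on the transported representation
  have hscalF : ∀ (z : H) (hz : z ∈ Subgroup.center H),
      ρfin z = (φ ⟨z, hz⟩ : ℂ) • (LinearMap.id : (Fin n → ℂ) →ₗ[ℂ] (Fin n → ℂ)) := by
    intro z hz
    rw [hρfin_apply, hscal z hz, map_smul, LinearEquiv.conj_id]
  set tr : H → ℂ := fun g => LinearMap.trace ℂ (Fin n → ℂ) (ρfin g) with htr
  have hfinrank : Module.finrank ℂ (Fin n → ℂ) = n := by simp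
  have htrz : ∀ (z : H) (hz : z ∈ Subgroup.center H), tr z = (φ ⟨z, hz⟩ : ℂ) * n := by
    intro z hz
    show LinearMap.trace ℂ (Fin n → ℂ) (ρfin z) = _
    rw [hscalF z hz, map_smul, LinearMap.trace_id, smul_eq_mul, hfinrank]
  have htr0 : ∀ g : H, g ∉ Subgroup.center H → tr g = 0 := by
    intro g hg
    obtain ⟨x, hx⟩ : ∃ x : H, ¬ (x * g = g * x) := by
      by_contra hc; push_neg at hc; exact hg (Subgroup.mem_center_iff.mpr hc)
    set c := ⁅g⁻¹, x⁻¹⁆ with hcdef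
    have hcZ : c ∈ commutator H := by
      rw [commutator_def]
      exact Subgroup.commutator_mem_commutator (Subgroup.mem_top _) (Subgroup.mem_top _)
    have hc1 : c ≠ 1 := by
      intro h1
      rw [hcdef, commutatorElement_eq_one_iff_mul_comm] at h1
      apply hx
      have h2 := congrArg (fun y => y⁻¹) h1
      simpa [mul_inv_rev] using h2
    have hgc : g * c = x⁻¹ * g * x := by rw [hcdef]; group
    have hφc : (φ ⟨c, hHZ hcZ⟩ : ℂ) ≠ 1 := by
      intro heq
      have h1 : χ ⟨c, hcZ⟩ = 1 := by
        rw [← hres c hcZ]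
        exact Units.ext (by simpa using heq)
      have h2 : (⟨c, hcZ⟩ : ↥(commutator H)) = 1 := hχ (by rw [h1, map_one])
      exact hc1 (by simpa [Subtype.ext_iff] using h2)
    have e1 : tr (g * c) = (φ ⟨c, hHZ hcZ⟩ : ℂ) * tr g := by
      show LinearMap.trace ℂ (Fin n → ℂ) (ρfin (g * c)) = _
      rw [map_mul, hscalF c (hHZ hcZ), ← Module.End.one_eq_id, mul_smul_comm, mul_one,
        map_smul, smul_eq_mul]
    have e2 : tr (g * c) = tr g := by
      show LinearMap.trace ℂ (Fin n → ℂ) (ρfin (g * c))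
          = LinearMap.trace ℂ (Fin n → ℂ) (ρfin g)
      rw [hgc, show x⁻¹ * g * x = x⁻¹ * (g * x) by group, map_mul, LinearMap.trace_mul_comm,
        ← map_mul, show g * x * x⁻¹ = g by group]
    have key : ((φ ⟨c, hHZ hcZ⟩ : ℂ) - 1) * tr g = 0 := by
      rw [sub_mul, one_mul, ← e1, e2, sub_self]
    rcases mul_eq_zero.mp key with h | h
    · exact absurd (sub_eq_zero.mp h) hφc
    · exact h
  -- the commutant is one-dimensional
  have hinv1 : Module.finrank ℂ ((Representation.linHom ρfin ρfin).invariants) = 1 := by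
    have hid : (LinearMap.id : (Fin n → ℂ) →ₗ[ℂ] (Fin n → ℂ))
        ∈ (Representation.linHom ρfin ρfin).invariants := by
      rw [Representation.mem_invariants]
      intro g
      rw [Representation.linHom_apply, LinearMap.id_comp, ← Module.End.mul_eq_comp,
        ← map_mul, mul_inv_cancel, map_one, Module.End.one_eq_id]
    have heq : (Representation.linHom ρfin ρfin).invariants
        = Submodule.span ℂ {(LinearMap.id : (Fin n → ℂ) →ₗ[ℂ] (Fin n → ℂ))} := by
      apply le_antisymm
      · intro f hf
        rw [Representation.mem_invariants] at hf
        have hcomm : ∀ g, f ∘ₗ ρfin g = ρfin g ∘ₗ f := by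
          intro g
          have h1 : ρfin g * f * ρfin g⁻¹ = f := by
            have h0 := hf g
            rwa [Representation.linHom_apply, ← Module.End.mul_eq_comp,
              ← Module.End.mul_eq_comp] at h0
          have h3 := congrArg (fun F => F * ρfin g) h1
          rw [mul_assoc, mul_assoc, ← map_mul, inv_mul_cancel, map_one, mul_one] at h3
          rw [← Module.End.mul_eq_comp, ← Module.End.mul_eq_comp, h3]
        obtain ⟨μ, hμ⟩ := schur_scalar ρfin hirrfin f hcomm
        rw [hμ]
        exact Submodule.smul_mem _ _ (Submodule.mem_span_singleton_self _)
      · rw [Submodule.span_le, Set.singleton_subset_iff]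
        exact hid
    rw [heq]
    apply finrank_span_singleton
    intro h0
    obtain ⟨u, hu⟩ := exists_ne (0 : Fin n → ℂ)
    have := LinearMap.congr_fun h0 u
    simp only [LinearMap.id_apply, LinearMap.zero_apply] at this
    exact hu this
  -- the orthogonality sum
  have hsum : ∑ g : H, tr g * tr g⁻¹ = (Fintype.card H : ℂ) := by
    set E := Representation.linHom ρfin ρfin with hE
    haveI : Module.Free ℂ E.invariants := by exact Module.Free.of_divisionRing ℂ ↥E.invariants
    haveI : Module.Finite ℂ E.invariants := FiniteDimensional.finiteDimensional_submodule _
    haveI : Module.Free ℂ (LinearMap.ker E.averageMap) := by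
      exact Module.Free.of_divisionRing ℂ ↥(LinearMap.ker E.averageMap)
    haveI : Module.Finite ℂ (LinearMap.ker E.averageMap) :=
      FiniteDimensional.finiteDimensional_submodule _
    have hproj := (Representation.isProj_averageMap E).trace
    have havg : E.averageMap = ⅟(Fintype.card H : ℂ) • ∑ g : H, E g := by
      rw [Representation.averageMap, GroupAlgebra.average, map_smul, map_sum]
      congr 1
      exact Finset.sum_congr rfl fun g _ => Representation.asAlgebraHom_of E g
    have h1 : LinearMap.trace ℂ _ E.averageMap
        = ⅟(Fintype.card H : ℂ) * ∑ g : H, tr g * tr g⁻¹ := by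
      rw [havg, map_smul, map_sum, smul_eq_mul]
      congr 1
      exact Finset.sum_congr rfl fun g _ => trace_linHom ρfin g
    have h2 : ⅟(Fintype.card H : ℂ) * (∑ g : H, tr g * tr g⁻¹) = 1 := by
      rw [← h1, hproj, hinv1, Nat.cast_one]
    calc ∑ g : H, tr g * tr g⁻¹
        = (Fintype.card H : ℂ) * (⅟(Fintype.card H : ℂ) * ∑ g : H, tr g * tr g⁻¹) := by
          rw [← mul_assoc, mul_invOf_self, one_mul]
      _ = (Fintype.card H : ℂ) := by rw [h2, mul_one]
  -- evaluating the sum over the center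
  have hcsum : ∑ g : H, tr g * tr g⁻¹
      = (Nat.card ↥(Subgroup.center H) : ℂ) * ((n : ℂ) * n) := by
    have hterm : ∀ g : H, tr g * tr g⁻¹
        = if g ∈ Subgroup.center H then (n : ℂ) * n else 0 := by
      intro g
      by_cases hg : g ∈ Subgroup.center H
      · rw [if_pos hg, htrz g hg, htrz g⁻¹ (Subgroup.inv_mem _ hg)]
        have h1 : (⟨g⁻¹, Subgroup.inv_mem _ hg⟩ : ↥(Subgroup.center H)) = (⟨g, hg⟩)⁻¹ := rfl
        rw [h1, map_inv]
        have hu : (φ ⟨g, hg⟩ : ℂ) * ((φ ⟨g, hg⟩)⁻¹ : ℂˣ) = 1 := by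
          rw [← Units.val_mul, mul_inv_cancel, Units.val_one]
        calc (φ ⟨g, hg⟩ : ℂ) * n * (((φ ⟨g, hg⟩)⁻¹ : ℂˣ) * n)
            = ((φ ⟨g, hg⟩ : ℂ) * ((φ ⟨g, hg⟩)⁻¹ : ℂˣ)) * ((n : ℂ) * n) := by ring
          _ = (n : ℂ) * n := by rw [hu, one_mul]
      · rw [if_neg hg, htr0 g hg, zero_mul]
    rw [Finset.sum_congr rfl fun g _ => hterm g, ← Finset.sum_filter, Finset.sum_const,
      nsmul_eq_mul]
    congr 1
    rw [Nat.card_eq_fintype_card, Fintype.card_subtype]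
  have hZpos : 0 < Nat.card ↥(Subgroup.center H) := Nat.card_pos
  have hcards : (Nat.card ↥(Subgroup.center H)) * (Subgroup.center H).index = Fintype.card H := by
    rw [Subgroup.card_mul_index, Nat.card_eq_fintype_card]
  have hindex : n * n = (Subgroup.center H).index := by
    have hc : (Nat.card ↥(Subgroup.center H) : ℂ) * ((n : ℂ) * n)
        = (Nat.card ↥(Subgroup.center H) : ℂ) * ((Subgroup.center H).index : ℂ) := by
      rw [← hcsum, hsum, ← hcards]
      push_cast
      ring
    have h2 := mul_left_cancel₀
      (a := (Nat.card ↥(Subgroup.center H) : ℂ))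
      (Nat.cast_ne_zero.mpr hZpos.ne') hc
    exact_mod_cast h2
  have hHcard : (Nat.card ↥(Subgroup.center H)) * (n * n) = Fintype.card H := by
    rw [hindex]; exact hcards
  refine ⟨n, hnpos, hindex, n, ρfin, hnpos, hirrfin, ?_, ?_⟩
  · rw [map_one]
    rw [LinearMap.trace_one]
    simp
  · intro g
    show _ = (n : ℂ) * tr g
    by_cases hg : g ∈ Subgroup.center H
    · rw [inducedFromCenter]
      have hconj : ∀ x : H, x⁻¹ * g * x = g := by
        intro x
        have h1 := (Subgroup.mem_center_iff.mp hg) x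
        rw [mul_assoc, ← h1, ← mul_assoc, inv_mul_cancel, one_mul]
      have hdite : ∀ x : H,
          (if h : x⁻¹ * g * x ∈ Subgroup.center H then (φ ⟨x⁻¹ * g * x, h⟩ : ℂ) else 0)
            = (φ ⟨g, hg⟩ : ℂ) := by
        intro x
        simp only [hconj x]
        rw [dif_pos hg]
      rw [Finset.sum_congr rfl fun x _ => hdite x, Finset.sum_const, Finset.card_univ,
        nsmul_eq_mul, htrz g hg]
      have hZne : (Nat.card ↥(Subgroup.center H) : ℂ) ≠ 0 := Nat.cast_ne_zero.mpr hZpos.ne'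
      have hcardsC : (Fintype.card H : ℂ)
          = (Nat.card ↥(Subgroup.center H) : ℂ) * ((n : ℂ) * n) := by
        rw [← hHcard]; push_cast; ring
      rw [hcardsC]
      field_simp
    · rw [htr0 g hg, mul_zero, inducedFromCenter]
      have hz : ∀ x : H,
          (if h : x⁻¹ * g * x ∈ Subgroup.center H then (φ ⟨x⁻¹ * g * x, h⟩ : ℂ) else 0) = 0 := by
        intro x
        rw [dif_neg]
        intro hc
        apply hg
        have h2 := Subgroup.Normal.conj_mem (inferInstance : (Subgroup.center H).Normal) _ hc x
        have h3 : x * (x⁻¹ * g * x) * x⁻¹ = g := by group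
        rwa [h3] at h2
      rw [Finset.sum_congr rfl fun x _ => hz x, Finset.sum_const_zero, mul_zero]
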